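/- Let G be a finite graph with vertex set U ∪ V where U = {u_1,...,u_{2m}}, the odd-indexed u's are isolated, the even-indexed u's form a clique and each even-indexed u is adjacent to every vertex of V. Consider the ordered vertex colouring game where all of U precedes all of V in the order (odd and even u's alternating so that Maker plays the odd-indexed and Breaker the even-indexed ones). Then with any starting palette of c colours, after all of U is played exactly c − m colours remain usable on every vertex of V, and the winner of the game equals the winner of the ordered vertex colouring game on G[V] with c − m colours. -/

import Mathlib

/-- In the ordered vertex colouring game, colour `c` is legal at vertex `v` under the
partial colouring `col` when no earlier neighbour of `v` has colour `c`. -/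
def OLegal {n k : ℕ} (G : SimpleGraph (Fin n)) (col : Fin n → Option (Fin k))
    (v : Fin n) (c : Fin k) : Prop :=
  ∀ j : Fin n, j < v → G.Adj j v → col j ≠ some c

/-- `OMakerWins G k col m` : in the ordered vertex colouring game on `G` with palette
`Fin k`, where vertices are coloured in the natural order of `Fin n`, the first `m`
vertices have been coloured as recorded in `col`, and Maker (who colours the
even-indexed positions, moving first) has a strategy guaranteeing that all vertices
get coloured. -/
inductive OMakerWins {n : ℕ} (G : SimpleGraph (Fin n)) (k : ℕ) :
    (Fin n → Option (Fin k)) → ℕ → Prop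
  | done (col : Fin n → Option (Fin k)) (m : ℕ) (h : n ≤ m) : OMakerWins G k col m
  | maker (col : Fin n → Option (Fin k)) (m : ℕ) (h : m < n) (hm : m % 2 = 0)
      (c : Fin k) (hc : OLegal G col ⟨m, h⟩ c)
      (ih : OMakerWins G k (Function.update col ⟨m, h⟩ (some c)) (m + 1)) :
      OMakerWins G k col m
  | breaker (col : Fin n → Option (Fin k)) (m : ℕ) (h : m < n) (hm : m % 2 = 1)
      (hex : ∃ c, OLegal G col ⟨m, h⟩ c)
      (ih : ∀ c, OLegal G col ⟨m, h⟩ c →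
        OMakerWins G k (Function.update col ⟨m, h⟩ (some c)) (m + 1)) :
      OMakerWins G k col m

/-- `OBreakerWins G k col m` : from the position where the first `m` vertices are
coloured as in `col`, Breaker has a strategy forcing some vertex to become impossible
to colour in the ordered vertex colouring game on `G` with palette `Fin k`. -/
inductive OBreakerWins {n : ℕ} (G : SimpleGraph (Fin n)) (k : ℕ) :
    (Fin n → Option (Fin k)) → ℕ → Prop
  | stuck (col : Fin n → Option (Fin k)) (m : ℕ) (h : m < n)
      (hs : ¬ ∃ c, OLegal G col ⟨m, h⟩ c) : OBreakerWins G k col m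
  | maker (col : Fin n → Option (Fin k)) (m : ℕ) (h : m < n) (hm : m % 2 = 0)
      (ih : ∀ c, OLegal G col ⟨m, h⟩ c →
        OBreakerWins G k (Function.update col ⟨m, h⟩ (some c)) (m + 1)) :
      OBreakerWins G k col m
  | breaker (col : Fin n → Option (Fin k)) (m : ℕ) (h : m < n) (hm : m % 2 = 1)
      (c : Fin k) (hc : OLegal G col ⟨m, h⟩ c)
      (ih : OBreakerWins G k (Function.update col ⟨m, h⟩ (some c)) (m + 1)) :
      OBreakerWins G k col m

/-- The gadget graph on `U ∪ V` where `U = {u_1, …, u_{2m}}` is represented by the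
indices `0, …, 2m - 1` of `Fin (2*m + n)` (the vertex `u_i` having index `i - 1`, so
odd-indexed `u`'s get even indices, played by Maker, and even-indexed `u`'s get odd
indices, played by Breaker) and `V` by the indices `2m, …, 2m + n - 1`, carrying a copy
of `H`.  The odd-indexed `u`'s are isolated; the even-indexed `u`'s form a clique and
are joined to every vertex of `V`. -/
def Gadget (m n : ℕ) (H : SimpleGraph (Fin n)) : SimpleGraph (Fin (2 * m + n)) :=
  SimpleGraph.fromRel (fun u v =>
    (u.1 % 2 = 1 ∧ u.1 < 2 * m ∧ v.1 % 2 = 1 ∧ v.1 < 2 * m) ∨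
    (u.1 % 2 = 1 ∧ u.1 < 2 * m ∧ 2 * m ≤ v.1) ∨
    (∃ (hu : 2 * m ≤ u.1) (hv : 2 * m ≤ v.1),
      H.Adj ⟨u.1 - 2 * m, by have := u.2; omega⟩ ⟨v.1 - 2 * m, by have := v.2; omega⟩))

variable {m n : ℕ} {H : SimpleGraph (Fin n)}

lemma gadget_adj_iff {u v : Fin (2 * m + n)} :
    (Gadget m n H).Adj u v ↔ u ≠ v ∧
      ((u.1 % 2 = 1 ∧ u.1 < 2 * m ∧ v.1 % 2 = 1 ∧ v.1 < 2 * m) ∨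
       (u.1 % 2 = 1 ∧ u.1 < 2 * m ∧ 2 * m ≤ v.1) ∨
       (v.1 % 2 = 1 ∧ v.1 < 2 * m ∧ 2 * m ≤ u.1) ∨
       (∃ (hu : 2 * m ≤ u.1) (hv : 2 * m ≤ v.1),
         H.Adj ⟨u.1 - 2 * m, by have := u.2; omega⟩ ⟨v.1 - 2 * m, by have := v.2; omega⟩)) := by
  rw [Gadget, SimpleGraph.fromRel_adj]
  constructor
  · rintro ⟨hne, h | h⟩
    · exact ⟨hne, by tauto⟩
    · refine ⟨hne, ?_⟩
      rcases h with h | h | ⟨hv, hu, h⟩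
      · tauto
      · tauto
      · exact Or.inr (Or.inr (Or.inr ⟨hu, hv, h.symm⟩))
  · rintro ⟨hne, h | h | h | ⟨hu, hv, h⟩⟩
    · exact ⟨hne, Or.inl (by tauto)⟩
    · exact ⟨hne, Or.inl (by tauto)⟩
    · exact ⟨hne, Or.inr (by tauto)⟩
    · exact ⟨hne, Or.inl (Or.inr (Or.inr ⟨hu, hv, h⟩))⟩

lemma not_adj_even {u v : Fin (2 * m + n)} (h0 : u.1 % 2 = 0) (h1 : u.1 < 2 * m) :
    ¬ (Gadget m n H).Adj u v := by
  rw [gadget_adj_iff]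
  rintro ⟨-, h | h | h | ⟨hu, -, -⟩⟩ <;> omega

lemma adj_breaker_V {u v : Fin (2 * m + n)} (h0 : u.1 % 2 = 1) (h1 : u.1 < 2 * m)
    (h2 : 2 * m ≤ v.1) : (Gadget m n H).Adj u v := by
  rw [gadget_adj_iff]
  exact ⟨by intro e; rw [e] at h1; omega, Or.inr (Or.inl ⟨h0, h1, h2⟩)⟩

lemma adj_breaker_breaker {u v : Fin (2 * m + n)} (h0 : u.1 % 2 = 1) (h1 : u.1 < 2 * m)
    (h2 : v.1 % 2 = 1) (h3 : v.1 < 2 * m) (hne : u ≠ v) : (Gadget m n H).Adj u v := by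
  rw [gadget_adj_iff]; exact ⟨hne, Or.inl ⟨h0, h1, h2, h3⟩⟩

lemma adj_V_trichotomy {u v : Fin (2 * m + n)} (hv : 2 * m ≤ v.1)
    (h : (Gadget m n H).Adj u v) :
    (u.1 % 2 = 1 ∧ u.1 < 2 * m) ∨
    (∃ (hu : 2 * m ≤ u.1), H.Adj ⟨u.1 - 2 * m, by have := u.2; omega⟩
        ⟨v.1 - 2 * m, by have := v.2; omega⟩) := by
  rw [gadget_adj_iff] at h
  rcases h with ⟨hne, h | h | h | ⟨hu, hv', h⟩⟩
  · omega
  · exact Or.inl ⟨h.1, h.2.1⟩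
  · omega
  · exact Or.inr ⟨hu, h⟩

lemma adj_breaker_earlier {b u : Fin (2 * m + n)} (hb1 : b.1 < 2 * m)
    (hu : u.1 < b.1) (h : (Gadget m n H).Adj u b) : u.1 % 2 = 1 := by
  rw [gadget_adj_iff] at h
  rcases h with ⟨-, h | h | h | ⟨h1, h2, -⟩⟩ <;> omega

lemma adj_V_V {u v : Fin (2 * m + n)} (hu : 2 * m ≤ u.1) (hv : 2 * m ≤ v.1)
    (h : H.Adj ⟨u.1 - 2 * m, by have := u.2; omega⟩ ⟨v.1 - 2 * m, by have := v.2; omega⟩) :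
    (Gadget m n H).Adj u v := by
  rw [gadget_adj_iff]
  refine ⟨?_, Or.inr (Or.inr (Or.inr ⟨hu, hv, h⟩))⟩
  intro e; subst e; exact H.irrefl h

lemma adj_V_V' {s t : Fin n} (h : H.Adj s t) :
    (Gadget m n H).Adj ⟨2 * m + s.1, by have := s.2; omega⟩
      ⟨2 * m + t.1, by have := t.2; omega⟩ := by
  apply adj_V_V (by simp) (by simp)
  have e1 : (⟨(⟨2 * m + s.1, by have := s.2; omega⟩ : Fin (2 * m + n)).1 - 2 * m,
      by have := s.2; omega⟩ : Fin n) = s := by ext; simp only [Fin.val_mk]; omega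
  have e2 : (⟨(⟨2 * m + t.1, by have := t.2; omega⟩ : Fin (2 * m + n)).1 - 2 * m,
      by have := t.2; omega⟩ : Fin n) = t := by ext; simp only [Fin.val_mk]; omega
  rw [e1, e2]; exact h

structure VInv (m n c : ℕ) (H : SimpleGraph (Fin n)) (F : Finset (Fin c))
    (e : Fin (c - m) → Fin c) (col : Fin (2 * m + n) → Option (Fin c))
    (col' : Fin n → Option (Fin (c - m))) : Prop where
  j1 : ∀ f ∈ F, ∃ j : Fin (2 * m + n), j.1 % 2 = 1 ∧ j.1 < 2 * m ∧ col j = some f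
  j2 : ∀ j : Fin (2 * m + n), j.1 % 2 = 1 → j.1 < 2 * m → ∃ f ∈ F, col j = some f
  j3 : ∀ s : Fin n, col ⟨2 * m + s.1, by have := s.2; omega⟩ = Option.map e (col' s)

variable {c : ℕ} {F : Finset (Fin c)} {e : Fin (c - m) → Fin c}
  {col : Fin (2 * m + n) → Option (Fin c)} {col' : Fin n → Option (Fin (c - m))}

lemma legal_F (inv : VInv m n c H F e col col') {t : ℕ} (ht : t < n)
    {ch : Fin c} (hch : ch ∈ F) :
    ¬ OLegal (Gadget m n H) col ⟨2 * m + t, by omega⟩ ch := by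
  intro hleg
  obtain ⟨j, hj1, hj2, hj3⟩ := inv.j1 ch hch
  exact hleg j (by simp [Fin.lt_def]; omega) (adj_breaker_V hj1 hj2 (by simp)) hj3

lemma legal_iff (he_inj : Function.Injective e) (he_mem : ∀ i, e i ∉ F)
    (inv : VInv m n c H F e col col') {t : ℕ} (ht : t < n) (ch' : Fin (c - m)) :
    OLegal (Gadget m n H) col ⟨2 * m + t, by omega⟩ (e ch') ↔
      OLegal H col' ⟨t, ht⟩ ch' := by
  constructor
  · intro hleg j' hj' hadj heq
    have hvv : (Gadget m n H).Adj ⟨2 * m + j'.1, by have := j'.2; omega⟩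
        ⟨2 * m + t, by omega⟩ := adj_V_V' hadj
    refine hleg ⟨2 * m + j'.1, by have := j'.2; omega⟩
      (by simp [Fin.lt_def]; exact hj') hvv ?_
    rw [inv.j3 j', heq]; rfl
  · intro hleg j hj hadj heq
    rcases adj_V_trichotomy (by simp) hadj with ⟨ho, hlt⟩ | ⟨hu, hH⟩
    · obtain ⟨f, hf, hcf⟩ := inv.j2 j ho hlt
      rw [hcf] at heq
      exact he_mem ch' (by rwa [← Option.some_inj.mp heq])
    · have hs : j.1 - 2 * m < n := by have := j.2; omega
      have hj2 : j = ⟨2 * m + (j.1 - 2 * m), by omega⟩ := Fin.ext (by simp; omega)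
      rw [hj2, inv.j3 ⟨j.1 - 2 * m, hs⟩] at heq
      rw [Option.map_eq_some_iff] at heq
      obtain ⟨a, ha, hea⟩ := heq
      have : a = ch' := he_inj hea
      subst this
      refine hleg ⟨j.1 - 2 * m, hs⟩ ?_ ?_ ha
      · simp [Fin.lt_def] at hj ⊢; omega
      · have e2 : (⟨t, ht⟩ : Fin n) = ⟨(2 * m + t) - 2 * m, by omega⟩ := by
          ext; simp only [Fin.val_mk]; omega
        rw [e2]; exact hH

lemma legal_iff' (he_inj : Function.Injective e) (he_mem : ∀ i, e i ∉ F)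
    (he_surj : ∀ ch : Fin c, ch ∉ F → ∃ i, e i = ch)
    (inv : VInv m n c H F e col col') {t : ℕ} (ht : t < n) (ch : Fin c) :
    OLegal (Gadget m n H) col ⟨2 * m + t, by omega⟩ ch ↔
      ∃ ch', e ch' = ch ∧ OLegal H col' ⟨t, ht⟩ ch' := by
  constructor
  · intro hleg
    have hch : ch ∉ F := fun hch => legal_F inv ht hch hleg
    obtain ⟨ch', he⟩ := he_surj ch hch
    exact ⟨ch', he, (legal_iff he_inj he_mem inv ht ch').mp (he ▸ hleg)⟩
  · rintro ⟨ch', rfl, hleg⟩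
    exact (legal_iff he_inj he_mem inv ht ch').mpr hleg

lemma VInv.update (inv : VInv m n c H F e col col') {t : ℕ} (ht : t < n)
    (ch' : Fin (c - m)) :
    VInv m n c H F e
      (Function.update col ⟨2 * m + t, by omega⟩ (some (e ch')))
      (Function.update col' ⟨t, ht⟩ (some ch')) := by
  constructor
  · intro f hf
    obtain ⟨j, h1, h2, h3⟩ := inv.j1 f hf
    refine ⟨j, h1, h2, ?_⟩
    rwa [Function.update_of_ne (by intro hj; rw [hj] at h2; simp only [Fin.val_mk] at h2; omega)]
  · intro j h1 h2
    obtain ⟨f, hf, h3⟩ := inv.j2 j h1 h2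
    refine ⟨f, hf, ?_⟩
    rwa [Function.update_of_ne (by intro hj; rw [hj] at h2; simp only [Fin.val_mk] at h2; omega)]
  · intro s
    by_cases hst : s = ⟨t, ht⟩
    · subst hst
      simp [Function.update_self]
    · rw [Function.update_of_ne hst, Function.update_of_ne
        (fun hj => hst (Fin.ext (by simpa using Fin.val_eq_of_eq hj))), inv.j3 s]

lemma vphase_fwd (he_inj : Function.Injective e) (he_mem : ∀ i, e i ∉ F)
    (he_surj : ∀ ch : Fin c, ch ∉ F → ∃ i, e i = ch) :
    ∀ (k t : ℕ) (col : Fin (2 * m + n) → Option (Fin c))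
      (col' : Fin n → Option (Fin (c - m))), n ≤ t + k →
      VInv m n c H F e col col' →
      OMakerWins (Gadget m n H) c col (2 * m + t) →
      OMakerWins H (c - m) col' t := by
  intro k
  induction k with
  | zero => intro t col col' hb _ _; exact OMakerWins.done col' t (by omega)
  | succ k IH =>
    intro t col col' hb inv hw
    by_cases ht : t < n
    · cases hw with
      | done _ _ h => exact OMakerWins.done col' t (by omega)
      | maker _ _ h hm ch hc ihw =>
        have hm' : t % 2 = 0 := by omega
        obtain ⟨ch', rfl, hleg'⟩ := (legal_iff' he_inj he_mem he_surj inv ht ch).mp hc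
        exact OMakerWins.maker col' t ht hm' ch' hleg'
          (IH (t + 1) _ _ (by omega) (inv.update ht ch') ihw)
      | breaker _ _ h hm hex ihw =>
        have hm' : t % 2 = 1 := by omega
        obtain ⟨ch, hch⟩ := hex
        obtain ⟨ch0, rfl, hleg0⟩ := (legal_iff' he_inj he_mem he_surj inv ht ch).mp hch
        refine OMakerWins.breaker col' t ht hm' ⟨ch0, hleg0⟩ ?_
        intro ch' hleg'
        have hg : OLegal (Gadget m n H) col ⟨2 * m + t, by omega⟩ (e ch') :=
          (legal_iff he_inj he_mem inv ht ch').mpr hleg'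
        exact IH (t + 1) _ _ (by omega) (inv.update ht ch') (ihw (e ch') hg)
    · exact OMakerWins.done col' t (by omega)

lemma vphase_bwd (he_inj : Function.Injective e) (he_mem : ∀ i, e i ∉ F)
    (he_surj : ∀ ch : Fin c, ch ∉ F → ∃ i, e i = ch) :
    ∀ (k t : ℕ) (col : Fin (2 * m + n) → Option (Fin c))
      (col' : Fin n → Option (Fin (c - m))), n ≤ t + k →
      VInv m n c H F e col col' →
      OMakerWins H (c - m) col' t →
      OMakerWins (Gadget m n H) c col (2 * m + t) := by
  intro k
  induction k with
  | zero => intro t col col' hb _ _; exact OMakerWins.done col (2 * m + t) (by omega)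
  | succ k IH =>
    intro t col col' hb inv hw
    by_cases ht : t < n
    · cases hw with
      | done _ _ h => exact OMakerWins.done col (2 * m + t) (by omega)
      | maker _ _ h hm ch' hc ihw =>
        have hm' : (2 * m + t) % 2 = 0 := by omega
        refine OMakerWins.maker col (2 * m + t) (by omega) hm' (e ch')
          ((legal_iff he_inj he_mem inv ht ch').mpr hc) ?_
        exact IH (t + 1) _ _ (by omega) (inv.update ht ch') ihw
      | breaker _ _ h hm hex ihw =>
        have hm' : (2 * m + t) % 2 = 1 := by omega
        obtain ⟨ch0, hch0⟩ := hex
        refine OMakerWins.breaker col (2 * m + t) (by omega) hm'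
          ⟨e ch0, (legal_iff he_inj he_mem inv ht ch0).mpr hch0⟩ ?_
        intro ch hch
        obtain ⟨ch', rfl, hleg'⟩ := (legal_iff' he_inj he_mem he_surj inv ht ch).mp hch
        exact IH (t + 1) _ _ (by omega) (inv.update ht ch') (ihw ch' hleg')
    · exact OMakerWins.done col (2 * m + t) (by omega)

lemma legal_even {col : Fin (2 * m + n) → Option (Fin c)} {v : Fin (2 * m + n)}
    (h0 : v.1 % 2 = 0) (h1 : v.1 < 2 * m) (ch : Fin c) :
    OLegal (Gadget m n H) col v ch := by
  intro j _ hadj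
  exact absurd hadj.symm (not_adj_even h0 h1)

lemma breaker_exists (hmc : m ≤ c) {col : Fin (2 * m + n) → Option (Fin c)} {s : ℕ}
    (hs : s < 2 * m) (hso : s % 2 = 1) :
    ∃ ch : Fin c, OLegal (Gadget m n H) col ⟨s, by omega⟩ ch := by
  by_contra hno
  push_neg at hno
  have key : ∀ ch : Fin c, ∃ j : Fin (2 * m + n),
      j.1 < s ∧ j.1 % 2 = 1 ∧ col j = some ch := by
    intro ch
    have := hno ch
    rw [OLegal] at this
    push_neg at this
    obtain ⟨j, hj1, hj2, hj3⟩ := this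
    have hjs : j.1 < s := by
      have := hj1
      simp only [Fin.lt_def, Fin.val_mk] at this
      exact this
    exact ⟨j, hjs, adj_breaker_earlier (by simp only [Fin.val_mk]; omega) hjs hj2, hj3⟩
  choose f hf1 hf2 hf3 using key
  have hinj : Function.Injective f := by
    intro a b hab
    have := hf3 a
    rw [hab, hf3 b] at this
    exact (Option.some_inj.mp this).symm
  have ginj : Function.Injective (fun ch : Fin c =>
      (⟨(f ch).1 / 2, by have := hf1 ch; have := hf2 ch; omega⟩ : Fin (s / 2))) := by
    intro a b hab
    simp only [Fin.mk.injEq] at hab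
    have ha1 := hf1 a; have ha2 := hf2 a
    have hb1 := hf1 b; have hb2 := hf2 b
    exact hinj (Fin.ext (by omega))
  have := Fintype.card_le_of_injective _ ginj
  simp only [Fintype.card_fin] at this
  omega

structure UInv (m n c : ℕ) (col : Fin (2 * m + n) → Option (Fin c)) (s : ℕ) : Prop where
  u1 : ∀ j : Fin (2 * m + n), s ≤ j.1 → col j = none
  u2 : ∀ j : Fin (2 * m + n), j.1 % 2 = 1 → j.1 < s → (col j).isSome
  u3 : ∀ i j : Fin (2 * m + n), i.1 % 2 = 1 → i.1 < s → j.1 % 2 = 1 → j.1 < s →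
      i ≠ j → col i ≠ col j

lemma UInv.maker_update {col : Fin (2 * m + n) → Option (Fin c)} {s : ℕ}
    (inv : UInv m n c col s) (hs : s < 2 * m + n) (hse : s % 2 = 0) (ch : Fin c) :
    UInv m n c (Function.update col ⟨s, hs⟩ (some ch)) (s + 1) := by
  constructor
  · intro j hj
    rw [Function.update_of_ne (by intro hj2; rw [hj2] at hj; simp only [Fin.val_mk] at hj; omega)]
    exact inv.u1 j (by omega)
  · intro j h1 h2
    rw [Function.update_of_ne (by intro hj2; rw [hj2] at h1; simp only [Fin.val_mk] at h1; omega)]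
    exact inv.u2 j h1 (by omega)
  · intro i j h1 h2 h3 h4 hne
    rw [Function.update_of_ne (by intro hj2; rw [hj2] at h1; simp only [Fin.val_mk] at h1; omega),
        Function.update_of_ne (by intro hj2; rw [hj2] at h3; simp only [Fin.val_mk] at h3; omega)]
    exact inv.u3 i j h1 (by omega) h3 (by omega) hne

lemma UInv.breaker_update {col : Fin (2 * m + n) → Option (Fin c)} {s : ℕ}
    (inv : UInv m n c col s) (hs : s < 2 * m) (hso : s % 2 = 1) {ch : Fin c}
    (hleg : OLegal (Gadget m n H) col ⟨s, by omega⟩ ch) :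
    UInv m n c (Function.update col ⟨s, by omega⟩ (some ch)) (s + 1) := by
  have hvs : ∀ j : Fin (2 * m + n), j ≠ ⟨s, by omega⟩ → j.1 ≠ s :=
    fun j hj hh => hj (Fin.ext hh)
  have hother : ∀ j : Fin (2 * m + n), j.1 % 2 = 1 → j.1 < s → col j ≠ some ch := by
    intro j h1 h2
    exact hleg j (by simp [Fin.lt_def]; omega)
      (adj_breaker_breaker h1 (by omega) hso hs
        (by intro hj; rw [hj] at h2; simp only [Fin.val_mk] at h2; omega))
  constructor
  · intro j hj
    rw [Function.update_of_ne (by intro hj2; rw [hj2] at hj; simp only [Fin.val_mk] at hj; omega)]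
    exact inv.u1 j (by omega)
  · intro j h1 h2
    by_cases hj : j = ⟨s, by omega⟩
    · rw [hj, Function.update_self]; rfl
    · rw [Function.update_of_ne hj]
      exact inv.u2 j h1 (by have := hvs j hj; omega)
  · intro i j h1 h2 h3 h4 hne
    by_cases hi : i = ⟨s, by omega⟩
    · have hj' : j ≠ ⟨s, by omega⟩ := fun hh => hne (hi.trans hh.symm)
      have hjs : j.1 < s := by have := hvs j hj'; omega
      rw [hi, Function.update_self, Function.update_of_ne hj']
      exact fun hcol => hother j h3 hjs hcol.symm
    · have his : i.1 ≠ s := hvs i hi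
      rw [Function.update_of_ne hi]
      by_cases hj : j = ⟨s, by omega⟩
      · rw [hj, Function.update_self]
        exact hother i h1 (by omega)
      · have hjs := hvs j hj
        rw [Function.update_of_ne hj]
        exact inv.u3 i j h1 (by omega) h3 (by omega) hne

lemma mkF (col : Fin (2 * m + n) → Option (Fin c))
    (h2 : ∀ j : Fin (2 * m + n), j.1 % 2 = 1 → j.1 < 2 * m → (col j).isSome)
    (h3 : ∀ i j : Fin (2 * m + n), i.1 % 2 = 1 → i.1 < 2 * m → j.1 % 2 = 1 →
      j.1 < 2 * m → i ≠ j → col i ≠ col j) :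
    ∃ F : Finset (Fin c), F.card = m ∧
      (∀ ch : Fin c, ch ∈ F ↔
        ∃ j : Fin (2 * m + n), j.1 % 2 = 1 ∧ j.1 < 2 * m ∧ col j = some ch) := by
  have hv : ∀ i : Fin m, 2 * i.1 + 1 < 2 * m + n := fun i => by have := i.2; omega
  have hodd : ∀ i : Fin m, ((⟨2 * i.1 + 1, hv i⟩ : Fin (2 * m + n))).1 % 2 = 1 :=
    fun i => by simp only [Fin.val_mk]; omega
  have hlt : ∀ i : Fin m, ((⟨2 * i.1 + 1, hv i⟩ : Fin (2 * m + n))).1 < 2 * m :=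
    fun i => by simp only [Fin.val_mk]; have := i.2; omega
  set f : Fin m → Fin c :=
    fun i => (col ⟨2 * i.1 + 1, hv i⟩).get (h2 _ (hodd i) (hlt i)) with hf
  have hsome : ∀ i : Fin m, col ⟨2 * i.1 + 1, hv i⟩ = some (f i) :=
    fun i => (Option.some_get _).symm
  have finj : Function.Injective f := by
    intro a b hab
    by_contra hne
    have hvne : (⟨2 * a.1 + 1, hv a⟩ : Fin (2 * m + n)) ≠ ⟨2 * b.1 + 1, hv b⟩ := by
      intro hh
      apply hne
      have := Fin.val_eq_of_eq hh
      simp only [Fin.val_mk] at this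
      exact Fin.ext (by omega)
    exact h3 _ _ (hodd a) (hlt a) (hodd b) (hlt b) hvne
      (by rw [hsome a, hsome b, hab])
  refine ⟨Finset.image f Finset.univ, ?_, ?_⟩
  · rw [Finset.card_image_of_injective _ finj, Finset.card_univ, Fintype.card_fin]
  · intro ch
    simp only [Finset.mem_image, Finset.mem_univ, true_and]
    constructor
    · rintro ⟨i, rfl⟩
      exact ⟨⟨2 * i.1 + 1, hv i⟩, hodd i, hlt i, hsome i⟩
    · rintro ⟨j, hj1, hj2, hj3⟩
      refine ⟨⟨j.1 / 2, by omega⟩, ?_⟩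
      have hvj : (⟨2 * ((⟨j.1 / 2, by omega⟩ : Fin m)).1 + 1,
          hv ⟨j.1 / 2, by omega⟩⟩ : Fin (2 * m + n)) = j := by
        ext; simp only [Fin.val_mk]; omega
      have := hsome ⟨j.1 / 2, by omega⟩
      rw [hvj, hj3] at this
      exact (Option.some_inj.mp this).symm

lemma transition_game (hmc : m ≤ c) (col : Fin (2 * m + n) → Option (Fin c))
    (h2 : ∀ j : Fin (2 * m + n), j.1 % 2 = 1 → j.1 < 2 * m → (col j).isSome)
    (h3 : ∀ i j : Fin (2 * m + n), i.1 % 2 = 1 → i.1 < 2 * m → j.1 % 2 = 1 →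
      j.1 < 2 * m → i ≠ j → col i ≠ col j)
    (hnone : ∀ v : Fin (2 * m + n), 2 * m ≤ v.1 → col v = none) :
    OMakerWins (Gadget m n H) c col (2 * m) ↔
      OMakerWins H (c - m) (fun _ => none) 0 := by
  obtain ⟨F, hcard, hmem⟩ := mkF col h2 h3
  have hcompl : Fᶜ.card = c - m := by
    rw [Finset.card_compl, hcard, Fintype.card_fin]
  set e : Fin (c - m) → Fin c := fun i => Fᶜ.orderEmbOfFin hcompl i with he
  have he_inj : Function.Injective e := (Fᶜ.orderEmbOfFin hcompl).injective
  have he_mem : ∀ i, e i ∉ F := fun i =>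
    Finset.mem_compl.mp (Finset.orderEmbOfFin_mem Fᶜ hcompl i)
  have he_surj : ∀ ch : Fin c, ch ∉ F → ∃ i, e i = ch := by
    intro ch hch
    have : ch ∈ Set.range (Fᶜ.orderEmbOfFin hcompl) := by
      rw [Finset.range_orderEmbOfFin]
      exact Finset.mem_coe.mpr (Finset.mem_compl.mpr hch)
    exact this
  have inv : VInv m n c H F e col (fun _ => none) := by
    constructor
    · intro f hf; exact (hmem f).mp hf
    · intro j hj1 hj2
      obtain ⟨ch, hch⟩ := Option.isSome_iff_exists.mp (h2 j hj1 hj2)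
      exact ⟨ch, (hmem ch).mpr ⟨j, hj1, hj2, hch⟩, hch⟩
    · intro s
      simp only [Option.map_none]
      exact hnone _ (by simp only [Fin.val_mk]; omega)
  constructor
  · intro hw
    exact vphase_fwd he_inj he_mem he_surj n 0 col (fun _ => none) (by omega) inv hw
  · intro hw
    exact vphase_bwd he_inj he_mem he_surj n 0 col (fun _ => none) (by omega) inv hw

lemma uphase_fwd (hmc : m ≤ c) :
    ∀ (k s : ℕ) (col : Fin (2 * m + n) → Option (Fin c)), 2 * m ≤ s + k → s ≤ 2 * m →
      UInv m n c col s → OMakerWins (Gadget m n H) c col s →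
      OMakerWins H (c - m) (fun _ => none) 0 := by
  intro k
  induction k with
  | zero =>
    intro s col hb hs inv hw
    have hs' : s = 2 * m := by omega
    subst hs'
    exact (transition_game hmc col inv.u2 (fun i j a b c d e => inv.u3 i j a b c d e)
      (fun v hv => inv.u1 v (by omega))).mp hw
  | succ k IH =>
    intro s col hb hs inv hw
    by_cases hs2 : s = 2 * m
    · subst hs2
      exact (transition_game hmc col inv.u2 (fun i j a b c d e => inv.u3 i j a b c d e)
        (fun v hv => inv.u1 v (by omega))).mp hw
    · have hslt : s < 2 * m := by omega
      cases hw with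
      | done _ _ h => exact absurd h (by omega)
      | maker _ _ h hm ch hc ihw =>
        exact IH (s + 1) _ (by omega) (by omega) (inv.maker_update h hm ch) ihw
      | breaker _ _ h hm hex ihw =>
        obtain ⟨ch, hch⟩ := hex
        exact IH (s + 1) _ (by omega) (by omega)
          (inv.breaker_update hslt hm hch) (ihw ch hch)

lemma uphase_bwd (hmc : m ≤ c) :
    ∀ (k s : ℕ) (col : Fin (2 * m + n) → Option (Fin c)), 2 * m = s + k →
      UInv m n c col s → OMakerWins H (c - m) (fun _ => none) 0 →
      OMakerWins (Gadget m n H) c col s := by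
  intro k
  induction k with
  | zero =>
    intro s col hb inv hw
    have hs' : s = 2 * m := by omega
    subst hs'
    exact (transition_game hmc col inv.u2 (fun i j a b c d e => inv.u3 i j a b c d e)
      (fun v hv => inv.u1 v (by omega))).mpr hw
  | succ k IH =>
    intro s col hb inv hw
    have hslt : s < 2 * m := by omega
    have hc0 : 0 < c := by omega
    by_cases hpar : s % 2 = 0
    · refine OMakerWins.maker col s (by omega) hpar ⟨0, hc0⟩
        (legal_even hpar hslt _) ?_
      exact IH (s + 1) _ (by omega) (inv.maker_update (by omega) hpar _) hw
    · have hpar' : s % 2 = 1 := by omega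
      refine OMakerWins.breaker col s (by omega) hpar'
        (breaker_exists hmc hslt hpar') ?_
      intro ch hch
      exact IH (s + 1) _ (by omega) (inv.breaker_update hslt hpar' hch) hw

lemma part1 (hmc : m ≤ c) (col : Fin (2 * m + n) → Option (Fin c))
    (h2 : ∀ j : Fin (2 * m + n), j.1 % 2 = 1 → j.1 < 2 * m → (col j).isSome)
    (h3 : ∀ i j : Fin (2 * m + n), i.1 % 2 = 1 → i.1 < 2 * m → j.1 % 2 = 1 →
      j.1 < 2 * m → i ≠ j → col i ≠ col j)
    (hnone : ∀ v : Fin (2 * m + n), 2 * m ≤ v.1 → col v = none)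
    (v : Fin (2 * m + n)) (hv : 2 * m ≤ v.1) :
    Set.ncard {ch : Fin c |
      ∀ u : Fin (2 * m + n), (Gadget m n H).Adj u v → col u ≠ some ch} = c - m := by
  obtain ⟨F, hcard, hmem⟩ := mkF col h2 h3
  have hset : {ch : Fin c |
      ∀ u : Fin (2 * m + n), (Gadget m n H).Adj u v → col u ≠ some ch} = ↑(Fᶜ) := by
    ext ch
    simp only [Set.mem_setOf_eq, Finset.coe_compl, Set.mem_compl_iff,
      Finset.mem_coe]
    constructor
    · intro hset hF
      obtain ⟨j, hj1, hj2, hj3⟩ := (hmem ch).mp hF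
      exact hset j (adj_breaker_V hj1 hj2 hv) hj3
    · intro hF u hadj heq
      rcases adj_V_trichotomy hv hadj with ⟨ho, hlt⟩ | ⟨hu, hH⟩
      · exact hF ((hmem ch).mpr ⟨u, ho, hlt, heq⟩)
      · rw [hnone u hu] at heq
        exact nomatch heq
  rw [hset, Set.ncard_coe_finset, Finset.card_compl, hcard, Fintype.card_fin]

lemma final (hmc : m ≤ c) :
    (∀ col : Fin (2 * m + n) → Option (Fin c),
      (∀ i : Fin (2 * m + n), i.1 % 2 = 1 → i.1 < 2 * m → (col i).isSome) →
      (∀ i j : Fin (2 * m + n), i.1 % 2 = 1 → i.1 < 2 * m → j.1 % 2 = 1 → j.1 < 2 * m →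
        i ≠ j → col i ≠ col j) →
      (∀ v : Fin (2 * m + n), 2 * m ≤ v.1 → col v = none) →
      ∀ v : Fin (2 * m + n), 2 * m ≤ v.1 →
        Set.ncard {ch : Fin c |
          ∀ u : Fin (2 * m + n), (Gadget m n H).Adj u v → col u ≠ some ch} = c - m) ∧
    (OMakerWins (Gadget m n H) c (fun _ => none) 0 ↔
      OMakerWins H (c - m) (fun _ => none) 0) := by
  constructor
  · intro col h2 h3 hnone v hv
    exact part1 hmc col h2 h3 hnone v hv
  · have inv0 : UInv m n c (fun _ => none) 0 := by
      constructor
      · intro j _; rfl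
      · intro j _ hj; omega
      · intro i j _ hi; omega
    constructor
    · intro hw
      exact uphase_fwd hmc (2 * m) 0 (fun _ => none) (by omega) (by omega) inv0 hw
    · intro hw
      exact uphase_bwd hmc (2 * m) 0 (fun _ => none) (by omega) inv0 hw

/-- Palette-reduction gadget.  Let `G` be the gadget graph built
from `H` as above, with the ordered vertex colouring game played with a palette of `c`
colours, `m ≤ c`.  First: in any position in which all of `U` has been (properly)
played — the Breaker-vertices of `U` all coloured, with pairwise distinct colours since
they form a clique — and `V` is untouched, every vertex of `V` has exactly `c - m`
usable colours remaining (the same palette at every vertex of `V`).  Second: the winner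
of the ordered game on the gadget with `c` colours equals the winner of the ordered
game on `H` with `c - m` colours. -/
theorem gadget_palette_reduction (m n : ℕ) (H : SimpleGraph (Fin n)) (c : ℕ)
    (hmc : m ≤ c) :
    (∀ col : Fin (2 * m + n) → Option (Fin c),
      (∀ i : Fin (2 * m + n), i.1 % 2 = 1 → i.1 < 2 * m → (col i).isSome) →
      (∀ i j : Fin (2 * m + n), i.1 % 2 = 1 → i.1 < 2 * m → j.1 % 2 = 1 → j.1 < 2 * m →
        i ≠ j → col i ≠ col j) →
      (∀ v : Fin (2 * m + n), 2 * m ≤ v.1 → col v = none) →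
      ∀ v : Fin (2 * m + n), 2 * m ≤ v.1 →
        Set.ncard {ch : Fin c |
          ∀ u : Fin (2 * m + n), (Gadget m n H).Adj u v → col u ≠ some ch} = c - m) ∧
    (OMakerWins (Gadget m n H) c (fun _ => none) 0 ↔
      OMakerWins H (c - m) (fun _ => none) 0) := by
  exact final hmc
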